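/- Let (N,v) be a game, and suppose 𝒫 and 𝒬 are proper partitions of some nonempty S ⊆ N\{s} such that −|𝒬|·v(N) + Σ_{P∈𝒫} v(P) + Σ_{Q∈𝒬} v(N\Q) + (|𝒫|+|𝒬|)·ε > 0 for some ε ∈ ℝ. Then the system {x(R) ≥ v(R)+ε for all nonempty R ⊊ N, x(N)=v(N)} is infeasible, i.e., the least core value ε* satisfies ε* ≤ (|𝒬|·v(N) − Σ_{P∈𝒫} v(P) − Σ_{Q∈𝒬} v(N\Q)) / (|𝒫|+|𝒬|). -/
import Mathlib


open Finset

/-- `Ps` is a proper partition of `S`: a family of pairwise disjoint nonempty sets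
whose union is `S`. -/
def IsProperPartition {α : Type*} [DecidableEq α] (Ps : Finset (Finset α)) (S : Finset α) : Prop :=
  (∀ P ∈ Ps, P.Nonempty) ∧ (∀ P ∈ Ps, ∀ Q ∈ Ps, P ≠ Q → Disjoint P Q) ∧ Ps.biUnion id = S

theorem farkas_certificate_infeasibility {α : Type*} [Fintype α] [DecidableEq α]
    (v : Finset α → ℝ) (h0 : v ∅ = 0) (s : α)
    (S : Finset α) (hSne : S.Nonempty) (hS : S ⊆ ({s} : Finset α)ᶜ)
    (Ps Qs : Finset (Finset α))
    (hPs : IsProperPartition Ps S) (hQs : IsProperPartition Qs S)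
    (ε : ℝ)
    (hcert : 0 < -(Qs.card : ℝ) * v Finset.univ + ∑ P ∈ Ps, v P
        + ∑ Q ∈ Qs, v (Finset.univ \ Q) + ((Ps.card : ℝ) + (Qs.card : ℝ)) * ε) :
    (¬ ∃ x : α → ℝ, (∀ R : Finset α, R.Nonempty → R ≠ Finset.univ →
          v R + ε ≤ ∑ i ∈ R, x i) ∧ ∑ i, x i = v Finset.univ) ∧
    (∀ ε' : ℝ, (∃ x : α → ℝ, (∀ R : Finset α, R.Nonempty → R ≠ Finset.univ →
          v R + ε' ≤ ∑ i ∈ R, x i) ∧ ∑ i, x i = v Finset.univ) →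
        ε' ≤ ((Qs.card : ℝ) * v Finset.univ - ∑ P ∈ Ps, v P
          - ∑ Q ∈ Qs, v (Finset.univ \ Q)) / ((Ps.card : ℝ) + (Qs.card : ℝ))) := by
  obtain ⟨hPne, hPdisj, hPun⟩ := hPs
  obtain ⟨hQne, hQdisj, hQun⟩ := hQs
  have hPsne : Ps.Nonempty := by
    rcases Finset.eq_empty_or_nonempty Ps with h | h
    · simp [h] at hPun; exact absurd hPun.symm hSne.ne_empty
    · exact h
  have hQsne : Qs.Nonempty := by
    rcases Finset.eq_empty_or_nonempty Qs with h | h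
    · simp [h] at hQun; exact absurd hQun.symm hSne.ne_empty
    · exact h
  have hk : (0 : ℝ) < (Ps.card : ℝ) + (Qs.card : ℝ) := by
    have := hPsne.card_pos; have := hQsne.card_pos; positivity
  have key : ∀ ε' : ℝ, (∃ x : α → ℝ, (∀ R : Finset α, R.Nonempty → R ≠ Finset.univ →
          v R + ε' ≤ ∑ i ∈ R, x i) ∧ ∑ i, x i = v Finset.univ) →
        ε' ≤ ((Qs.card : ℝ) * v Finset.univ - ∑ P ∈ Ps, v P
          - ∑ Q ∈ Qs, v (Finset.univ \ Q)) / ((Ps.card : ℝ) + (Qs.card : ℝ)) := by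
    intro ε' ⟨x, hx, hxN⟩
    have hnotuniv : ∀ P ∈ Ps ∪ Qs, P ≠ Finset.univ := by
      intro P hP h
      have hPS : P ⊆ S := by
        rcases Finset.mem_union.1 hP with h' | h'
        · exact hPun ▸ Finset.subset_biUnion_of_mem id h'
        · exact hQun ▸ Finset.subset_biUnion_of_mem id h'
      have := hS (hPS (h ▸ Finset.mem_univ s))
      simp at this
    have hsum1 : ∑ P ∈ Ps, (v P + ε') ≤ ∑ i ∈ S, x i := by
      rw [← hPun, Finset.sum_biUnion]
      · exact Finset.sum_le_sum fun P hP =>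
          hx P (hPne P hP) (hnotuniv P (Finset.mem_union_left _ hP))
      · intro P hP Q hQ hne
        exact hPdisj P hP Q hQ hne
    have hsum2 : ∑ Q ∈ Qs, (v (Finset.univ \ Q) + ε')
        ≤ (Qs.card : ℝ) * v Finset.univ - ∑ i ∈ S, x i := by
      have hstep : ∑ Q ∈ Qs, (v (Finset.univ \ Q) + ε')
          ≤ ∑ Q ∈ Qs, (v Finset.univ - ∑ i ∈ Q, x i) := by
        apply Finset.sum_le_sum
        intro Q hQ
        have hne : (Finset.univ \ Q).Nonempty := ⟨s, by
          simp only [Finset.mem_sdiff, Finset.mem_univ, true_and]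
          intro hsQ
          have hQS : Q ⊆ S := hQun ▸ Finset.subset_biUnion_of_mem id hQ
          have := hS (hQS hsQ); simp at this⟩
        have hnu : Finset.univ \ Q ≠ Finset.univ := by
          intro h
          obtain ⟨a, ha⟩ := hQne Q hQ
          have : a ∈ Finset.univ \ Q := by rw [h]; exact Finset.mem_univ a
          simp [ha] at this
        have := hx _ hne hnu
        rw [Finset.sum_sdiff_eq_sub (Finset.subset_univ Q), hxN] at this
        linarith
      rw [Finset.sum_sub_distrib, Finset.sum_const, nsmul_eq_mul] at hstep
      have hS2 : ∑ i ∈ S, x i = ∑ Q ∈ Qs, ∑ i ∈ Q, x i := by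
        rw [← hQun]
        exact Finset.sum_biUnion fun P hP Q hQ hne => hQdisj P hP Q hQ hne
      linarith
    rw [Finset.sum_add_distrib, Finset.sum_const, nsmul_eq_mul] at hsum1 hsum2
    rw [le_div_iff₀ hk]
    linarith
  refine ⟨fun h => ?_, key⟩
  have := key ε h
  rw [le_div_iff₀ hk] at this
  linarith
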